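/- Let c : X × X → [0,∞) satisfy the triangle inequality, and suppose there are α > 0 and, for each compact K ⊆ X, a constant C_K with c(x,x') ≤ C_K·d(x,x')^α for x, x' in K ∩ 𝒞, where 𝒞 is a set. If x, x' lie in a connected compact subset U ⊆ 𝒞 ∩ K whose Hausdorff dimension is strictly less than α, then c(x, x') = 0. -/

import Mathlib

open Metric MeasureTheory Filter
open scoped ENNReal NNReal

lemma stmt17_rpow_add_le {α u v : ℝ} (hα : 0 < α) (hu : 0 ≤ u) (hv : 0 ≤ v) :
    (u + v) ^ α ≤ 2 ^ α * (u ^ α + v ^ α) := by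
  have h1 : u + v ≤ 2 * max u v := by
    rcases le_total u v with h | h
    · simp [max_eq_right h]; linarith
    · simp [max_eq_left h]; linarith
  have h2 : (u + v) ^ α ≤ (2 * max u v) ^ α :=
    Real.rpow_le_rpow (by positivity) h1 hα.le
  have h3 : (2 * max u v) ^ α = 2 ^ α * (max u v) ^ α :=
    Real.mul_rpow (by norm_num) (le_max_iff.2 (Or.inl hu))
  have h4 : (max u v) ^ α ≤ u ^ α + v ^ α := by
    rcases max_cases u v with ⟨h, _⟩ | ⟨h, _⟩ <;> rw [h]
    · nlinarith [Real.rpow_nonneg hv α]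
    · nlinarith [Real.rpow_nonneg hu α]
  calc (u + v) ^ α ≤ 2 ^ α * (max u v) ^ α := by rw [← h3]; exact h2
    _ ≤ 2 ^ α * (u ^ α + v ^ α) := by
        have : (0:ℝ) ≤ 2 ^ α := Real.rpow_nonneg (by norm_num) α
        nlinarith

lemma stmt17_walk_bound {X : Type*} [MetricSpace X] (c : X → X → ℝ)
    (htri : ∀ x y z : X, c x z ≤ c x y + c y z)
    (U : Set X) (V : ℕ → Set X) (α C : ℝ) (hα : 0 < α) (hC : 0 < C)
    (hH : ∀ p ∈ U, ∀ q ∈ U, c p q ≤ C * dist p q ^ α)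
    (hbd : ∀ i, EMetric.diam (V i) ≠ ⊤)
    (I : Finset ℕ) (hne : ∀ i ∈ I, (V i ∩ U).Nonempty)
    (G : SimpleGraph {i // i ∈ I})
    (hG : ∀ a b : {i // i ∈ I}, G.Adj a b → (V a.1 ∩ V b.1).Nonempty) :
    ∀ {a b : {i // i ∈ I}} (w : G.Walk a b) (p : X), p ∈ V a.1 → p ∈ U →
      ∀ q : X, q ∈ V b.1 → q ∈ U →
      c p q ≤ C * 2 ^ α *
        ((w.support.map fun k => diam (V k.1) ^ α).sum
          + (w.support.tail.map fun k => diam (V k.1) ^ α).sum) := by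
  intro a b w
  induction w with
  | @nil u =>
    intro p hpV hpU q hqV hqU
    simp only [SimpleGraph.Walk.support_nil, List.map_cons, List.map_nil, List.sum_cons,
      List.sum_nil, List.tail_cons, add_zero]
    have hd : dist p q ≤ diam (V u.1) := Metric.dist_le_diam_of_mem' (hbd u.1) hpV hqV
    have h1 : c p q ≤ C * dist p q ^ α := hH p hpU q hqU
    have h2 : dist p q ^ α ≤ diam (V u.1) ^ α :=
      Real.rpow_le_rpow dist_nonneg hd hα.le
    have h3 : (1:ℝ) ≤ 2 ^ α := Real.one_le_rpow (by norm_num) hα.le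
    have h4 : (0:ℝ) ≤ diam (V u.1) ^ α := Real.rpow_nonneg diam_nonneg α
    nlinarith [mul_le_mul_of_nonneg_left h2 hC.le, mul_nonneg hC.le h4]
  | @cons a a' b hadj w ih =>
    intro p hpV hpU q hqV hqU
    obtain ⟨r, hrV, hrU⟩ := hne a'.1 a'.2
    obtain ⟨z, hz1, hz2⟩ := hG a a' hadj
    have hdpz : dist p z ≤ diam (V a.1) := Metric.dist_le_diam_of_mem' (hbd a.1) hpV hz1
    have hdzr : dist z r ≤ diam (V a'.1) := Metric.dist_le_diam_of_mem' (hbd a'.1) hz2 hrV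
    have hdpr : dist p r ≤ diam (V a.1) + diam (V a'.1) :=
      (dist_triangle p z r).trans (by linarith)
    have h1 : c p r ≤ C * (2 ^ α * (diam (V a.1) ^ α + diam (V a'.1) ^ α)) := by
      have := hH p hpU r hrU
      have h2 : dist p r ^ α ≤ (diam (V a.1) + diam (V a'.1)) ^ α :=
        Real.rpow_le_rpow dist_nonneg hdpr hα.le
      have h3 := stmt17_rpow_add_le hα (diam_nonneg (s := V a.1)) (diam_nonneg (s := V a'.1))
      nlinarith
    have h2 := ih r hrV hrU q hqV hqU
    have hsupp : w.support = a' :: w.support.tail := w.support_eq_cons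
    simp only [SimpleGraph.Walk.support_cons, List.map_cons, List.sum_cons, List.tail_cons]
    have hc : c p q ≤ c p r + c r q := htri p r q
    have hS : ((w.support.map fun k => diam (V k.1) ^ α).sum : ℝ)
        = diam (V a'.1) ^ α + (w.support.tail.map fun k => diam (V k.1) ^ α).sum := by
      conv_lhs => rw [hsupp]
      simp only [List.map_cons, List.sum_cons]
    rw [hS] at h2 ⊢
    linarith

lemma stmt17_cover {X : Type*} [MetricSpace X] [MeasurableSpace X] [BorelSpace X] (U : Set X)
    (α : ℝ) (hα : 0 < α)
    (hμ : μH[α] U = 0) (ε : ℝ≥0∞) (hε0 : 0 < ε) (hεtop : ε ≠ ⊤) :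
    ∃ V : ℕ → Set X, (∀ n, IsOpen (V n)) ∧ U ⊆ ⋃ n, V n ∧
      ∑' n, EMetric.diam (V n) ^ α < 2 * ε := by
  rw [Measure.hausdorffMeasure_apply] at hμ
  have h0 : (⨅ (t : ℕ → Set X) (_ : U ⊆ ⋃ n, t n) (_ : ∀ n, EMetric.diam (t n) ≤ 1),
      ∑' n, ⨆ _ : (t n).Nonempty, EMetric.diam (t n) ^ α) = 0 := by
    refine le_antisymm ?_ zero_le
    rw [← hμ]
    exact le_iSup₂ (f := fun (r : ℝ≥0∞) (_ : 0 < r) =>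
      ⨅ (t : ℕ → Set X) (_ : U ⊆ ⋃ n, t n) (_ : ∀ n, EMetric.diam (t n) ≤ r),
        ∑' n, ⨆ _ : (t n).Nonempty, EMetric.diam (t n) ^ α) 1 one_pos
  have h1 : (⨅ (t : ℕ → Set X) (_ : U ⊆ ⋃ n, t n) (_ : ∀ n, EMetric.diam (t n) ≤ 1),
      ∑' n, ⨆ _ : (t n).Nonempty, EMetric.diam (t n) ^ α) < ε := h0 ▸ hε0
  obtain ⟨t, h1⟩ := iInf_lt_iff.mp h1
  obtain ⟨htU, h1⟩ := iInf_lt_iff.mp h1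
  obtain ⟨-, htsum0⟩ := iInf_lt_iff.mp h1
  have htsum : ∑' n, EMetric.diam (t n) ^ α < ε := by
    refine lt_of_le_of_lt (le_of_eq (tsum_congr fun n => ?_)) htsum0
    by_cases h : (t n).Nonempty
    · simp [h]
    · rw [Set.not_nonempty_iff_eq_empty.mp h]
      simp [ENNReal.zero_rpow_of_pos hα]
      exact Or.inl ⟨ediam_empty, hα⟩
  have htfin : ∀ n, EMetric.diam (t n) ≠ ⊤ := by
    intro n h
    have h2 : EMetric.diam (t n) ^ α ≤ ∑' n, EMetric.diam (t n) ^ α := ENNReal.le_tsum n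
    rw [h, ENNReal.top_rpow_of_pos hα] at h2
    exact not_top_lt (h2.trans_lt htsum)
  have hδ : ∀ n, ∃ δ : ℝ≥0, 0 < δ ∧
      (EMetric.diam (t n) + 2 * δ) ^ α ≤ EMetric.diam (t n) ^ α + ε * 2⁻¹ ^ (n + 1) := by
    intro n
    set d := EMetric.diam (t n) with hd
    have hdfin : d ≠ ⊤ := htfin n
    have hcont : Tendsto (fun s : ℝ≥0 => (d + 2 * (s : ℝ≥0∞)) ^ α) (nhds 0) (nhds (d ^ α)) := by
      have hcont' : Continuous fun s : ℝ≥0 => (d + 2 * (s : ℝ≥0∞)) ^ α :=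
        ENNReal.continuous_rpow_const.comp
          (continuous_const.add ((ENNReal.continuous_const_mul (by norm_num)).comp
            ENNReal.continuous_coe))
      simpa using hcont'.tendsto 0
    have hlt : d ^ α < d ^ α + ε * 2⁻¹ ^ (n + 1) := by
      refine ENNReal.lt_add_right (ENNReal.rpow_ne_top_of_nonneg hα.le hdfin) ?_
      exact mul_ne_zero hε0.ne' (pow_ne_zero _ (by norm_num))
    have hev : ∀ᶠ s : ℝ≥0 in nhdsWithin 0 (Set.Ioi 0),
        (d + 2 * (s : ℝ≥0∞)) ^ α < d ^ α + ε * 2⁻¹ ^ (n + 1) :=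
      (hcont.eventually_lt_const hlt).filter_mono nhdsWithin_le_nhds
    obtain ⟨δ, hδlt, hδmem⟩ := (hev.and (eventually_mem_nhdsWithin)).exists
    exact ⟨δ, hδmem, hδlt.le⟩
  choose δ hδpos hδle using hδ
  refine ⟨fun n => Metric.thickening (δ n) (t n), fun n => Metric.isOpen_thickening, ?_, ?_⟩
  · exact htU.trans (Set.iUnion_mono fun n =>
      Metric.self_subset_thickening (by exact_mod_cast hδpos n) _)
  · have hgeo : ∑' n : ℕ, (2⁻¹ : ℝ≥0∞) ^ (n + 1) = 1 := by
      simp_rw [pow_succ]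
      rw [ENNReal.tsum_mul_right, ENNReal.tsum_geometric, ENNReal.one_sub_inv_two]
      rw [inv_inv, ENNReal.mul_inv_cancel] <;> norm_num
    calc ∑' n, EMetric.diam (Metric.thickening (δ n) (t n)) ^ α
        ≤ ∑' n, (EMetric.diam (t n) ^ α + ε * 2⁻¹ ^ (n + 1)) := by
          refine ENNReal.tsum_le_tsum fun n => ?_
          refine le_trans (ENNReal.rpow_le_rpow ?_ hα.le) (hδle n)
          exact Metric.ediam_thickening_le (δ n)
      _ = (∑' n, EMetric.diam (t n) ^ α) + ε * ∑' n : ℕ, (2⁻¹ : ℝ≥0∞) ^ (n + 1) := by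
          rw [ENNReal.tsum_add, ENNReal.tsum_mul_left]
      _ = (∑' n, EMetric.diam (t n) ^ α) + ε := by rw [hgeo, mul_one]
      _ < ε + ε := ENNReal.add_lt_add_right hεtop htsum
      _ = 2 * ε := (two_mul ε).symm

/-- If `c` is a nonnegative symmetric-free cost satisfying the triangle inequality and an
`α`-Hölder bound `c(x,x') ≤ C_K d(x,x')^α` on each compact `K` (for points of `𝒞`), and
`x, x'` lie in a connected compact `U ⊆ 𝒞` with Hausdorff dimension `< α`, then
`c(x,x') = 0`. -/
theorem stmt_17 {X : Type*} [MetricSpace X]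
    (c : X → X → ℝ) (hc0 : ∀ x y : X, 0 ≤ c x y)
    (htri : ∀ x y z : X, c x z ≤ c x y + c y z)
    (𝒞 : Set X) (α : ℝ) (hα : 0 < α)
    (hHolder : ∀ K : Set X, IsCompact K → ∃ C > (0:ℝ), ∀ x ∈ K ∩ 𝒞, ∀ y ∈ K ∩ 𝒞,
      c x y ≤ C * dist x y ^ α)
    (U : Set X) (hUcomp : IsCompact U) (hUconn : IsConnected U) (hU𝒞 : U ⊆ 𝒞)
    (hdim : dimH U < ENNReal.ofReal α)
    (x x' : X) (hx : x ∈ U) (hx' : x' ∈ U) :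
    c x x' = 0 := by
  classical
  borelize X
  obtain ⟨C, hCpos, hC⟩ := hHolder U hUcomp
  have hH : ∀ p ∈ U, ∀ q ∈ U, c p q ≤ C * dist p q ^ α :=
    fun p hp q hq => hC p ⟨hp, hU𝒞 hp⟩ q ⟨hq, hU𝒞 hq⟩
  have h2α : (0:ℝ) < 2 ^ α := Real.rpow_pos_of_pos two_pos α
  refine le_antisymm ?_ (hc0 x x')
  refine le_of_forall_pos_le_add fun ε hε => ?_
  rw [zero_add]
  have hμ : μH[α] U = 0 := by
    have h := hausdorffMeasure_of_dimH_lt (X := X) (s := U) (d := α.toNNReal) hdim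
    rwa [Real.coe_toNNReal α hα.le] at h
  set e : ℝ := ε / (4 * C * 2 ^ α) with he
  have he0 : 0 < e := by positivity
  obtain ⟨V, hVopen, hVU, hVsum⟩ := stmt17_cover U α hα hμ (ENNReal.ofReal e)
    (ENNReal.ofReal_pos.2 he0) ENNReal.ofReal_ne_top
  obtain ⟨s, hs⟩ := hUcomp.elim_finite_subcover V hVopen hVU
  have hbd : ∀ i, EMetric.diam (V i) ≠ ⊤ := by
    intro i h
    have h2 : EMetric.diam (V i) ^ α ≤ ∑' n, EMetric.diam (V n) ^ α := ENNReal.le_tsum i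
    rw [h, ENNReal.top_rpow_of_pos hα] at h2
    exact not_top_lt (h2.trans_lt hVsum)
  have hsum_s : ∑ i ∈ s, diam (V i) ^ α ≤ 2 * e := by
    have h1 : ∑ i ∈ s, EMetric.diam (V i) ^ α ≤ 2 * ENNReal.ofReal e :=
      (ENNReal.sum_le_tsum s).trans hVsum.le
    have h2 := ENNReal.toReal_mono (by finiteness) h1
    rw [ENNReal.toReal_mul, ENNReal.toReal_ofReal he0.le, ENNReal.toReal_ofNat] at h2
    refine le_trans (le_of_eq ?_) h2
    rw [ENNReal.toReal_sum (fun i _ => ENNReal.rpow_ne_top_of_nonneg hα.le (hbd i))]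
    exact Finset.sum_congr rfl fun i _ => ENNReal.toReal_rpow _ _
  set I : Finset ℕ := s.filter (fun i => (V i ∩ U).Nonempty) with hIdef
  have hne : ∀ i ∈ I, (V i ∩ U).Nonempty := fun i hi => (Finset.mem_filter.mp hi).2
  set G : SimpleGraph {i // i ∈ I} :=
    { Adj := fun a b => a ≠ b ∧ (V a.1 ∩ V b.1).Nonempty
      symm := ⟨fun a b h => ⟨h.1.symm, h.2.imp fun z hz => ⟨hz.2, hz.1⟩⟩⟩
      loopless := ⟨fun a h => h.1 rfl⟩ } with hGdef
  have hGne : ∀ a b : {i // i ∈ I}, G.Adj a b → (V a.1 ∩ V b.1).Nonempty := fun a b h => h.2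
  obtain ⟨ix, hixI, hxV⟩ : ∃ i, ∃ _ : i ∈ I, x ∈ V i := by
    obtain ⟨i, his, hxi⟩ := Set.mem_iUnion₂.mp (hs hx)
    exact ⟨i, Finset.mem_filter.mpr ⟨his, ⟨x, hxi, hx⟩⟩, hxi⟩
  obtain ⟨ix', hixI', hx'V⟩ : ∃ i, ∃ _ : i ∈ I, x' ∈ V i := by
    obtain ⟨i, his, hxi⟩ := Set.mem_iUnion₂.mp (hs hx')
    exact ⟨i, Finset.mem_filter.mpr ⟨his, ⟨x', hxi, hx'⟩⟩, hxi⟩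
  set a₀ : {i // i ∈ I} := ⟨ix, hixI⟩ with ha₀
  set b₀ : {i // i ∈ I} := ⟨ix', hixI'⟩ with hb₀
  have hreach : G.Reachable a₀ b₀ := by
    set A : Set X := ⋃ (i : {i // i ∈ I}) (_ : G.Reachable a₀ i), V i.1 with hA
    set B : Set X := ⋃ (i : {i // i ∈ I}) (_ : ¬ G.Reachable a₀ i), V i.1 with hB
    have hAopen : IsOpen A := isOpen_iUnion fun i => isOpen_iUnion fun _ => hVopen i.1
    have hBopen : IsOpen B := isOpen_iUnion fun i => isOpen_iUnion fun _ => hVopen i.1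
    have hdisj : Disjoint A B := by
      rw [Set.disjoint_left]
      rintro z hzA hzB
      obtain ⟨i, hiR, hzi⟩ : ∃ i, G.Reachable a₀ i ∧ z ∈ V i.1 := by
        simpa [hA] using hzA
      obtain ⟨j, hjR, hzj⟩ : ∃ j, ¬ G.Reachable a₀ j ∧ z ∈ V j.1 := by
        simpa [hB] using hzB
      have hij : i ≠ j := fun h => hjR (h ▸ hiR)
      exact hjR (hiR.trans (SimpleGraph.Adj.reachable ⟨hij, ⟨z, hzi, hzj⟩⟩))
    have hcover : U ⊆ A ∪ B := by
      intro u hu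
      obtain ⟨i, his, hui⟩ := Set.mem_iUnion₂.mp (hs hu)
      have hiI : i ∈ I := Finset.mem_filter.mpr ⟨his, ⟨u, hui, hu⟩⟩
      by_cases hr : G.Reachable a₀ ⟨i, hiI⟩
      · exact Or.inl (Set.mem_iUnion₂.mpr ⟨⟨i, hiI⟩, hr, hui⟩)
      · exact Or.inr (Set.mem_iUnion₂.mpr ⟨⟨i, hiI⟩, hr, hui⟩)
    have hneA : (U ∩ A).Nonempty :=
      ⟨x, hx, Set.mem_iUnion₂.mpr ⟨a₀, SimpleGraph.Reachable.refl a₀, hxV⟩⟩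
    have hUA : U ⊆ A :=
      hUconn.isPreconnected.subset_left_of_subset_union hAopen hBopen hdisj hcover hneA
    obtain ⟨j, hjR, hx'j⟩ : ∃ j, G.Reachable a₀ j ∧ x' ∈ V j.1 := by
      simpa [hA] using hUA hx'
    by_cases hjb : j = b₀
    · exact hjb ▸ hjR
    · exact hjR.trans (SimpleGraph.Adj.reachable ⟨hjb, ⟨x', hx'j, hx'V⟩⟩)
  obtain ⟨w⟩ := hreach
  set p := w.toPath with hp
  have hbound := stmt17_walk_bound c htri U V α C hα hCpos hH hbd I hne G hGne
    p.1 x hxV hx x' hx'V hx'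
  have hnodup : p.1.support.Nodup := p.2.support_nodup
  set S : ℝ := (p.1.support.map fun k => diam (V k.1) ^ α).sum with hSdef
  set St : ℝ := (p.1.support.tail.map fun k => diam (V k.1) ^ α).sum with hStdef
  have hf0 : ∀ i : ℕ, 0 ≤ diam (V i) ^ α := fun i => Real.rpow_nonneg diam_nonneg α
  have hStS : St ≤ S := by
    have hsupp : p.1.support = a₀ :: p.1.support.tail := p.1.support_eq_cons
    have : S = diam (V a₀.1) ^ α + St := by
      rw [hSdef]; conv_lhs => rw [hsupp]
      simp only [List.map_cons, List.sum_cons, hStdef]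
    rw [this]
    have := hf0 a₀.1
    linarith
  have hSle : S ≤ ∑ i ∈ s, diam (V i) ^ α := by
    set l : List ℕ := p.1.support.map Subtype.val with hl
    have hlnodup : l.Nodup := hnodup.map Subtype.val_injective
    have hS : S = (l.map fun k => diam (V k) ^ α).sum := by
      rw [hSdef, hl, List.map_map]; rfl
    rw [hS, ← List.sum_toFinset _ hlnodup]
    refine Finset.sum_le_sum_of_subset_of_nonneg ?_ fun i _ _ => hf0 i
    intro i hi
    rw [List.mem_toFinset, hl] at hi
    obtain ⟨⟨j, hjI⟩, _, rfl⟩ := List.mem_map.mp hi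
    exact Finset.mem_of_mem_filter j hjI
  have hfinal : c x x' ≤ C * 2 ^ α * (S + St) := hbound
  have hSsum : S ≤ 2 * e := hSle.trans hsum_s
  have hval : C * 2 ^ α * (S + St) ≤ C * 2 ^ α * (2 * S) := by
    have h0 : 0 < C * 2 ^ α := by positivity
    nlinarith
  have : C * 2 ^ α * (2 * S) ≤ C * 2 ^ α * (2 * (2 * e)) := by
    have h0 : 0 < C * 2 ^ α := by positivity
    have hS2 : 2 * S ≤ 2 * (2 * e) := by linarith
    nlinarith
  have heε : C * 2 ^ α * (2 * (2 * e)) = ε := by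
    rw [he]
    field_simp
    ring
  linarith
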